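/- (Reparametrization invariance of Q.) Let β be a (φ, ℓ)-quasiperiodic family and let φ̃ : ℝ → ℝ be a smooth map with φ̃(t+1) = φ̃(t) + 1 for all t (for instance an orientation-preserving diffeomorphism commuting with the unit translation). Then the family β∘φ̃ : t ↦ β_{φ̃(t)} is again (φ, ℓ)-quasiperiodic, and Q(β∘φ̃)(x, y) = Q(β)(x, y) for all x, y ∈ E. -/

import Mathlib

/-- `(a ∧_B b)(x, y) = B(a x, b y) - B(a y, b x)` for maps `a, b : E → 𝔤`. -/
def wedgeB {𝔤 E : Type*} [NormedAddCommGroup 𝔤] [NormedSpace ℝ 𝔤]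
    [AddCommGroup E] [Module ℝ E]
    (B : 𝔤 →ₗ[ℝ] 𝔤 →ₗ[ℝ] ℝ) (a b : E → 𝔤) (x y : E) : ℝ :=
  B (a x) (b y) - B (a y) (b x)

/-- A `(φ, r)`-quasiperiodic family of linear maps `E → 𝔤`: smooth in `t` and
`β (t+1) = φ ∘ β t - r`. -/
def QuasiPeriodic {𝔤 E : Type*} [NormedAddCommGroup 𝔤] [NormedSpace ℝ 𝔤]
    [AddCommGroup E] [Module ℝ E]
    (φ : 𝔤 → 𝔤) (r : E → 𝔤) (β : ℝ → E →ₗ[ℝ] 𝔤) : Prop :=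
  (∀ x : E, ContDiff ℝ (⊤ : ℕ∞) (fun t => β t x)) ∧
  ∀ (t : ℝ) (x : E), β (t + 1) x = φ (β t x) - r x

/-- The functional `Q(β)(x,y) = (1/2)(ℓ ∧_B β_0)(x,y) + (1/2)∫₀¹ (β_t ∧_B β̇_t)(x,y) dt`. -/
noncomputable def Qfun {𝔤 E : Type*} [NormedAddCommGroup 𝔤] [NormedSpace ℝ 𝔤]
    [AddCommGroup E] [Module ℝ E]
    (B : 𝔤 →ₗ[ℝ] 𝔤 →ₗ[ℝ] ℝ) (ℓ : E → 𝔤) (β : ℝ → E → 𝔤) (x y : E) : ℝ :=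
  (1/2 : ℝ) * wedgeB B ℓ (β 0) x y
    + (1/2 : ℝ) * ∫ t in (0:ℝ)..1,
        wedgeB B (β t) (fun e => deriv (fun s => β s e) t) x y



/-- Core analytic lemma: reparametrization invariance of the scalar functional. -/
lemma Q_aux {𝔤 : Type*} [NormedAddCommGroup 𝔤] [NormedSpace ℝ 𝔤]
    (Bc : 𝔤 →L[ℝ] 𝔤 →L[ℝ] ℝ) (φc : 𝔤 →L[ℝ] 𝔤)
    (hφB : ∀ u v : 𝔤, Bc (φc u) (φc v) = Bc u v)
    (f g : ℝ → 𝔤) (lx ly : 𝔤)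
    (hfc : ContDiff ℝ (⊤ : ℕ∞) f) (hgc : ContDiff ℝ (⊤ : ℕ∞) g)
    (hfp : ∀ t, f (t + 1) = φc (f t) - φc lx)
    (hgp : ∀ t, g (t + 1) = φc (g t) - φc ly)
    (φt : ℝ → ℝ) (hφt : ContDiff ℝ (⊤ : ℕ∞) φt)
    (hper : ∀ t, φt (t + 1) = φt t + 1) :
    (1/2 : ℝ) * (Bc lx (g (φt 0)) - Bc ly (f (φt 0)))
      + (1/2 : ℝ) * ∫ t in (0:ℝ)..1,
          (Bc (f (φt t)) (deriv (fun s => g (φt s)) t)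
            - Bc (g (φt t)) (deriv (fun s => f (φt s)) t))
    = (1/2 : ℝ) * (Bc lx (g 0) - Bc ly (f 0))
      + (1/2 : ℝ) * ∫ t in (0:ℝ)..1,
          (Bc (f t) (deriv g t) - Bc (g t) (deriv f t)) := by
  have hfd : Differentiable ℝ f := hfc.differentiable (by simp)
  have hgd : Differentiable ℝ g := hgc.differentiable (by simp)
  have hφtd : Differentiable ℝ φt := hφt.differentiable (by simp)
  have hf' : ContDiff ℝ (⊤ : ℕ∞) (deriv f) := (contDiff_infty_iff_deriv.mp hfc).2
  have hg' : ContDiff ℝ (⊤ : ℕ∞) (deriv g) := (contDiff_infty_iff_deriv.mp hgc).2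
  have hφt' : ContDiff ℝ (⊤ : ℕ∞) (deriv φt) := (contDiff_infty_iff_deriv.mp hφt).2
  set F : ℝ → ℝ := fun t => Bc (f t) (deriv g t) - Bc (g t) (deriv f t) with hF
  set L : ℝ → ℝ := fun t => Bc lx (g t) - Bc ly (f t) with hL
  set a : ℝ := φt 0 with ha
  -- continuity of F
  have hpair : ∀ (u v : ℝ → 𝔤), ContDiff ℝ (⊤ : ℕ∞) u → ContDiff ℝ (⊤ : ℕ∞) v →
      ContDiff ℝ (⊤ : ℕ∞) (fun t => Bc (u t) (v t)) := by
    intro u v hu hv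
    exact (Bc.contDiff.comp hu).clm_apply hv
  have hFc : Continuous F :=
    (((hpair f (deriv g) hfc hg').sub (hpair g (deriv f) hgc hf')).continuous)
  -- derivative shift: deriv f (u+1) = φc (deriv f u)
  have hshift : ∀ (h : ℝ → 𝔤) (l0 : 𝔤), Differentiable ℝ h →
      (∀ t, h (t + 1) = φc (h t) - φc l0) → ∀ u, deriv h (u + 1) = φc (deriv h u) := by
    intro h l0 hhd hhp u
    have h1 : HasDerivAt (fun s : ℝ => h (s - 1)) (deriv h u) (u + 1) := by
      have hs : HasDerivAt (fun s : ℝ => s - 1) 1 (u + 1) := (hasDerivAt_id _).sub_const 1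
      have := HasDerivAt.scomp_of_eq (u + 1) (hhd u).hasDerivAt hs (by ring)
      simpa [Function.comp_def] using this
    have h2 : HasDerivAt (fun s : ℝ => φc (h (s - 1)) - φc l0) (φc (deriv h u)) (u + 1) :=
      (φc.hasFDerivAt.comp_hasDerivAt _ h1).sub_const _
    have h3 : h = fun s : ℝ => φc (h (s - 1)) - φc l0 := by
      funext s
      simpa using hhp (s - 1)
    have h4 : deriv h (u + 1) = deriv (fun s : ℝ => φc (h (s - 1)) - φc l0) (u + 1) := by
      rw [← h3]
    rw [h4, h2.deriv]
  have hdf1 := hshift f lx hfd hfp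
  have hdg1 := hshift g ly hgd hgp
  -- F shift identity
  have hFshift : ∀ u, F (u + 1) = F u - (Bc lx (deriv g u) - Bc ly (deriv f u)) := by
    intro u
    simp only [hF, hfp u, hgp u, hdf1 u, hdg1 u]
    have e1 : Bc (φc (f u) - φc lx) (φc (deriv g u)) = Bc (f u - lx) (deriv g u) := by
      rw [← map_sub φc, hφB]
    have e2 : Bc (φc (g u) - φc ly) (φc (deriv f u)) = Bc (g u - ly) (deriv f u) := by
      rw [← map_sub φc, hφB]
    rw [e1, e2]
    simp only [map_sub, ContinuousLinearMap.sub_apply]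
    ring
  -- derivative of L
  have hL' : ∀ u, HasDerivAt L (Bc lx (deriv g u) - Bc ly (deriv f u)) u := by
    intro u
    exact ((Bc lx).hasFDerivAt.comp_hasDerivAt u (hgd u).hasDerivAt).sub
      ((Bc ly).hasFDerivAt.comp_hasDerivAt u (hfd u).hasDerivAt)
  have hL'c : Continuous fun u => Bc lx (deriv g u) - Bc ly (deriv f u) :=
    (((Bc lx).continuous.comp hg'.continuous).sub ((Bc ly).continuous.comp hf'.continuous))
  -- chain rule identity for the integrand
  have hGeq : ∀ t, (Bc (f (φt t)) (deriv (fun s => g (φt s)) t)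
      - Bc (g (φt t)) (deriv (fun s => f (φt s)) t)) = deriv φt t • F (φt t) := by
    intro t
    have hdg : deriv (fun s => g (φt s)) t = deriv φt t • deriv g (φt t) :=
      (HasDerivAt.scomp t (hgd (φt t)).hasDerivAt (hφtd t).hasDerivAt).deriv
    have hdf : deriv (fun s => f (φt s)) t = deriv φt t • deriv f (φt t) :=
      (HasDerivAt.scomp t (hfd (φt t)).hasDerivAt (hφtd t).hasDerivAt).deriv
    rw [hdg, hdf]
    simp only [map_smul, smul_eq_mul, hF]
    ring
  -- substitution
  have hsub : (∫ t in (0:ℝ)..1, deriv φt t • F (φt t)) = ∫ u in a..(a+1), F u := by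
    have h := intervalIntegral.integral_comp_smul_deriv
      (a := (0:ℝ)) (b := (1:ℝ)) (f := φt) (f' := deriv φt) (g := F)
      (fun t _ => (hφtd t).hasDerivAt) (hφt'.continuous.continuousOn) hFc
    simp only [Function.comp] at h
    rw [h]
    have : φt 1 = a + 1 := by simpa using hper 0
    rw [this]
  have hFi : ∀ p q : ℝ, IntervalIntegrable F MeasureTheory.volume p q :=
    fun p q => hFc.intervalIntegrable p q
  -- splitting
  have hsplit : (∫ u in a..(a+1), F u)
      = (∫ u in (0:ℝ)..1, F u) + (∫ u in (1:ℝ)..(a+1), F u) - ∫ u in (0:ℝ)..a, F u := by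
    have h1 := intervalIntegral.integral_add_adjacent_intervals (hFi 0 a) (hFi a (a+1))
    have h2 := intervalIntegral.integral_add_adjacent_intervals (hFi 0 1) (hFi 1 (a+1))
    linarith
  -- translation
  have htrans : (∫ u in (1:ℝ)..(a+1), F u) = ∫ u in (0:ℝ)..a, F (u + 1) := by
    have := intervalIntegral.integral_comp_add_right (a := (0:ℝ)) (b := a) F 1
    rw [this]; norm_num
  -- FTC
  have hFTC : (∫ u in (0:ℝ)..a, (Bc lx (deriv g u) - Bc ly (deriv f u))) = L a - L 0 :=
    intervalIntegral.integral_eq_sub_of_hasDerivAt (fun u _ => hL' u)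
      (hL'c.intervalIntegrable 0 a)
  have hstep : (∫ u in (0:ℝ)..a, F (u + 1)) = (∫ u in (0:ℝ)..a, F u) - (L a - L 0) := by
    have heq : (fun u => F (u + 1))
        = fun u => F u - (Bc lx (deriv g u) - Bc ly (deriv f u)) := funext hFshift
    rw [heq, intervalIntegral.integral_sub (hFi 0 a) (hL'c.intervalIntegrable 0 a), hFTC]
  -- put together
  have hlhsint : (∫ t in (0:ℝ)..1,
      (Bc (f (φt t)) (deriv (fun s => g (φt s)) t)
        - Bc (g (φt t)) (deriv (fun s => f (φt s)) t))) = ∫ u in a..(a+1), F u := by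
    rw [show (fun t => (Bc (f (φt t)) (deriv (fun s => g (φt s)) t)
        - Bc (g (φt t)) (deriv (fun s => f (φt s)) t))) = fun t => deriv φt t • F (φt t)
      from funext hGeq]
    exact hsub
  have hLa : Bc lx (g a) - Bc ly (f a) = L a := rfl
  have hL0 : Bc lx (g 0) - Bc ly (f 0) = L 0 := rfl
  rw [hlhsint, hsplit, htrans, hstep]
  simp only [hLa, hL0, ← hF]
  ring

theorem Q_reparametrization_invariance'
    {𝔤 E : Type*} [NormedAddCommGroup 𝔤] [NormedSpace ℝ 𝔤] [FiniteDimensional ℝ 𝔤]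
    [AddCommGroup E] [Module ℝ E]
    (B : 𝔤 →ₗ[ℝ] 𝔤 →ₗ[ℝ] ℝ)
    (φ : 𝔤 ≃ₗ[ℝ] 𝔤)
    (hφB : ∀ x y : 𝔤, B (φ x) (φ y) = B x y)
    (ℓ : E →ₗ[ℝ] 𝔤)
    (β : ℝ → E →ₗ[ℝ] 𝔤)
    (hsm : ∀ x : E, ContDiff ℝ (⊤ : ℕ∞) (fun t => β t x))
    (hper : ∀ (t : ℝ) (x : E), β (t + 1) x = φ (β t x) - φ (ℓ x))
    (φt : ℝ → ℝ) (hφt_smooth : ContDiff ℝ (⊤ : ℕ∞) φt)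
    (hφt_per : ∀ t : ℝ, φt (t + 1) = φt t + 1)
    (x y : E) :
    (1/2 : ℝ) * (B (ℓ x) (β (φt 0) y) - B (ℓ y) (β (φt 0) x))
      + (1/2 : ℝ) * ∫ t in (0:ℝ)..1,
          (B (β (φt t) x) (deriv (fun s => β (φt s) y) t)
            - B (β (φt t) y) (deriv (fun s => β (φt s) x) t))
    = (1/2 : ℝ) * (B (ℓ x) (β 0 y) - B (ℓ y) (β 0 x))
      + (1/2 : ℝ) * ∫ t in (0:ℝ)..1,
          (B (β t x) (deriv (fun s => β s y) t) - B (β t y) (deriv (fun s => β s x) t)) := by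
  let B₂ : 𝔤 →ₗ[ℝ] (𝔤 →L[ℝ] ℝ) :=
    { toFun := fun v => LinearMap.toContinuousLinearMap (B v)
      map_add' := fun u v => by ext z; simp
      map_smul' := fun c v => by ext z; simp }
  let Bc : 𝔤 →L[ℝ] 𝔤 →L[ℝ] ℝ := LinearMap.toContinuousLinearMap B₂
  let φc : 𝔤 →L[ℝ] 𝔤 := LinearMap.toContinuousLinearMap (φ : 𝔤 →ₗ[ℝ] 𝔤)
  have hBc : ∀ u v : 𝔤, Bc u v = B u v := fun _ _ => rfl
  have hφc : ∀ v : 𝔤, φc v = φ v := fun _ => rfl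
  have key := Q_aux Bc φc
    (fun u v => by rw [hBc, hBc, hφc, hφc, hφB])
    (fun t => β t x) (fun t => β t y) (ℓ x) (ℓ y) (hsm x) (hsm y)
    (fun t => by rw [hφc, hφc]; exact hper t x)
    (fun t => by rw [hφc, hφc]; exact hper t y)
    φt hφt_smooth hφt_per
  exact key

/-- reparametrization invariance of `Q`: for a `(φ, ℓ)`-quasiperiodic
family `β` and smooth `φ̃ : ℝ → ℝ` with `φ̃(t+1) = φ̃(t) + 1`, the family
`t ↦ β (φ̃ t)` is again `(φ, ℓ)`-quasiperiodic and `Q(β∘φ̃) = Q(β)`. -/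
theorem Q_reparametrization_invariance
    {𝔤 E : Type*} [NormedAddCommGroup 𝔤] [NormedSpace ℝ 𝔤] [FiniteDimensional ℝ 𝔤]
    [AddCommGroup E] [Module ℝ E]
    (br : 𝔤 →ₗ[ℝ] 𝔤 →ₗ[ℝ] 𝔤)
    (br_alt : ∀ x : 𝔤, br x x = 0)
    (br_jacobi : ∀ x y z : 𝔤, br (br x y) z + br (br y z) x + br (br z x) y = 0)
    (B : 𝔤 →ₗ[ℝ] 𝔤 →ₗ[ℝ] ℝ)
    (B_symm : ∀ x y : 𝔤, B x y = B y x)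
    (B_inv : ∀ x y z : 𝔤, B (br x y) z = B x (br y z))
    (φ : 𝔤 ≃ₗ[ℝ] 𝔤)
    (hφbr : ∀ x y : 𝔤, φ (br x y) = br (φ x) (φ y))
    (hφB : ∀ x y : 𝔤, B (φ x) (φ y) = B x y)
    (ℓ : E →ₗ[ℝ] 𝔤)
    (β : ℝ → E →ₗ[ℝ] 𝔤)
    (hβ : QuasiPeriodic ⇑φ (fun x => φ (ℓ x)) β)
    (φt : ℝ → ℝ) (hφt_smooth : ContDiff ℝ (⊤ : ℕ∞) φt)
    (hφt_per : ∀ t : ℝ, φt (t + 1) = φt t + 1) :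
    QuasiPeriodic ⇑φ (fun x => φ (ℓ x)) (fun t => β (φt t)) ∧
    ∀ x y : E,
      Qfun B ⇑ℓ (fun t => ⇑(β (φt t))) x y = Qfun B ⇑ℓ (fun t => ⇑(β t)) x y := by
  obtain ⟨hsm, hper⟩ := hβ
  refine ⟨⟨fun x => (hsm x).comp hφt_smooth, fun t x => by
    show (β (φt (t + 1))) x = φ ((β (φt t)) x) - φ (ℓ x)
    rw [hφt_per t]; exact hper (φt t) x⟩, ?_⟩
  intro x y
  have key := Q_reparametrization_invariance' B φ hφB ℓ β hsm hper φt hφt_smooth hφt_per x y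
  simpa only [Qfun, wedgeB] using key
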